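/- Let F be a field and G ∈ M_m(F). Then G is a product of finitely many (one or more) square-zero matrices if and only if 2·rank(G) ≤ m (equivalently, rank(G) ≤ nullity(G)). Furthermore, if 2·rank(G) ≤ m, then for any integers r₁, r₂, r₃ with rank(G) ≤ rᵢ and 2rᵢ ≤ m (i = 1, 2, 3) there exist square-zero matrices S₁, S₂, S₃ ∈ M_m(F) with G = S₁S₂S₃ and rank(Sᵢ) = rᵢ; so at most three factors are ever needed. This bound is sharp: every nonzero G ∈ M_m(F) with R(G) = N(G) satisfies 2·rank(G) ≤ m but is not a product of two square-zero matrices. -/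

import Mathlib

set_option linter.unusedVariables false
set_option linter.unnecessarySimpa false
set_option maxHeartbeats 4000000
open Module Submodule LinearMap Set

section Helpers
variable {F V : Type*} [Field F] [AddCommGroup V] [Module F V]

theorem not_union {F V : Type*} [Field F] [AddCommGroup V] [Module F V] {P Q : Submodule F V}
    (hP : P < ⊤) (hQ : Q < ⊤) : ∃ v, v ∉ P ∧ v ∉ Q := by
  obtain ⟨a, -, ha⟩ := SetLike.exists_of_lt hP
  obtain ⟨b, -, hb⟩ := SetLike.exists_of_lt hQ
  by_cases haQ : a ∈ Q
  · by_cases hbP : b ∈ P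
    · refine ⟨a + b, fun h => ha ?_, fun h => hb ?_⟩
      · simpa using P.sub_mem h hbP
      · simpa using Q.sub_mem h haQ
    · exact ⟨b, hbP, hb⟩
  · exact ⟨a, ha, haQ⟩

theorem exists_avoid {F V : Type*} [Field F] [AddCommGroup V] [Module F V]
    [FiniteDimensional F V] (d : ℕ) :
    ∀ N R : Submodule F V, d + finrank F N ≤ finrank F V → d + finrank F R ≤ finrank F V →
    ∃ C : Submodule F V, finrank F C = d ∧ C ⊓ N = ⊥ ∧ C ⊓ R = ⊥ := by
  induction d with
  | zero => exact fun N R _ _ => ⟨⊥, finrank_bot F V, bot_inf_eq N, bot_inf_eq R⟩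
  | succ d ih =>
    intro N R hN hR
    have hNt : N < ⊤ := by
      refine lt_of_le_of_ne le_top fun h => ?_
      rw [h, finrank_top] at hN; omega
    have hRt : R < ⊤ := by
      refine lt_of_le_of_ne le_top fun h => ?_
      rw [h, finrank_top] at hR; omega
    obtain ⟨v, hvN, hvR⟩ := not_union hNt hRt
    have hv0 : v ≠ 0 := fun h => hvN (h ▸ N.zero_mem)
    have hspan : finrank F (F ∙ v) = 1 := finrank_span_singleton hv0
    have hNle : finrank F ((N ⊔ (F ∙ v) : Submodule F V) : Submodule F V) ≤ finrank F N + 1 := by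
      have := Submodule.finrank_sup_add_finrank_inf_eq N (F ∙ v)
      omega
    have hRle : finrank F ((R ⊔ (F ∙ v) : Submodule F V) : Submodule F V) ≤ finrank F R + 1 := by
      have := Submodule.finrank_sup_add_finrank_inf_eq R (F ∙ v)
      omega
    obtain ⟨C, hCd, hCN, hCR⟩ := ih (N ⊔ (F ∙ v)) (R ⊔ (F ∙ v)) (by omega) (by omega)
    have hvC : (F ∙ v) ⊓ C = ⊥ := by
      rw [inf_comm] at hCN
      exact le_bot_iff.mp <| le_trans (inf_le_inf_right C le_sup_right) (hCN.le)
    refine ⟨C ⊔ (F ∙ v), ?_, ?_, ?_⟩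
    · have h2 := Submodule.finrank_sup_add_finrank_inf_eq C (F ∙ v)
      rw [inf_comm] at hvC
      rw [hvC, finrank_bot] at h2
      omega
    · -- (C ⊔ span v) ⊓ N = ⊥
      rw [eq_bot_iff]
      rintro x ⟨hx1, hx2⟩
      obtain ⟨c, hc, z, hz, rfl⟩ := Submodule.mem_sup.mp hx1
      obtain ⟨a, rfl⟩ := Submodule.mem_span_singleton.mp hz
      rcases eq_or_ne a 0 with rfl | ha
      · have : c ∈ C ⊓ (N ⊔ (F ∙ v)) := ⟨hc, by simpa using Submodule.mem_sup_left hx2⟩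
        rw [hCN] at this
        simpa using this
      · exfalso
        apply hvN
        have hcN : c ∈ C ⊓ (N ⊔ (F ∙ v)) := by
          refine ⟨hc, ?_⟩
          have : a • v ∈ N ⊔ (F ∙ v) := Submodule.mem_sup_right (Submodule.mem_span_singleton.mpr ⟨a, rfl⟩)
          have h3 : c + a • v ∈ N ⊔ (F ∙ v) := Submodule.mem_sup_left hx2
          simpa using Submodule.sub_mem _ h3 this
        rw [hCN] at hcN
        have hc0 : c = 0 := by simpa using hcN
        subst hc0
        have : a • v ∈ N := by simpa using hx2
        have := N.smul_mem a⁻¹ this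
        rwa [smul_smul, inv_mul_cancel₀ ha, one_smul] at this
    · rw [eq_bot_iff]
      rintro x ⟨hx1, hx2⟩
      obtain ⟨c, hc, z, hz, rfl⟩ := Submodule.mem_sup.mp hx1
      obtain ⟨a, rfl⟩ := Submodule.mem_span_singleton.mp hz
      rcases eq_or_ne a 0 with rfl | ha
      · have : c ∈ C ⊓ (R ⊔ (F ∙ v)) := ⟨hc, by simpa using Submodule.mem_sup_left hx2⟩
        rw [hCR] at this
        simpa using this
      · exfalso
        apply hvR
        have hcR : c ∈ C ⊓ (R ⊔ (F ∙ v)) := by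
          refine ⟨hc, ?_⟩
          have : a • v ∈ R ⊔ (F ∙ v) := Submodule.mem_sup_right (Submodule.mem_span_singleton.mpr ⟨a, rfl⟩)
          have h3 : c + a • v ∈ R ⊔ (F ∙ v) := Submodule.mem_sup_left hx2
          simpa using Submodule.sub_mem _ h3 this
        rw [hCR] at hcR
        have hc0 : c = 0 := by simpa using hcR
        subst hc0
        have : a • v ∈ R := by simpa using hx2
        have := R.smul_mem a⁻¹ this
        rwa [smul_smul, inv_mul_cancel₀ ha, one_smul] at this


theorem constr_range' {ι : Type*} [Fintype ι] (b : Basis ι F V) (v : ι → V) :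
    LinearMap.range (b.constr F v) = span F (Set.range v) := by
  rw [LinearMap.range_eq_map, ← b.span_eq, Submodule.map_span, ← Set.range_comp]
  congr 1
  ext x
  constructor
  · rintro ⟨y, rfl⟩
    exact ⟨y, (Basis.constr_basis b F v y).symm ▸ rfl⟩
  · rintro ⟨y, rfl⟩
    exact ⟨y, Basis.constr_basis b F v y⟩

theorem constr_sq_zero {ι : Type*} [Fintype ι] (b : Basis ι F V) (v : ι → V)
    (h : ∀ i, v i = 0 ∨ ∃ t, v i = b t ∧ v t = 0) :
    (b.constr F v) ∘ₗ (b.constr F v) = 0 := by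
  apply b.ext
  intro i
  rw [LinearMap.comp_apply, Basis.constr_basis]
  rcases h i with h0 | ⟨t, ht, ht0⟩
  · simp [h0]
  · rw [ht, Basis.constr_basis, ht0, LinearMap.zero_apply]

theorem constr_rank {ι κ : Type*} [Fintype ι] [Fintype κ] (b : Basis ι F V) (v : ι → V)
    (u : κ → ι) (hu : Function.Injective u)
    (h1 : ∀ i, v i = 0 ∨ ∃ j, v i = b (u j))
    (h2 : ∀ j, ∃ i, v i = b (u j)) :
    finrank F (LinearMap.range (b.constr F v)) = Fintype.card κ := by
  rw [constr_range']
  have hspan : span F (Set.range v) = span F (Set.range (b ∘ u)) := by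
    apply le_antisymm
    · rw [Submodule.span_le]
      rintro x ⟨i, rfl⟩
      rcases h1 i with h0 | ⟨j, hj⟩
      · rw [h0]; exact Submodule.zero_mem _
      · rw [hj]; exact Submodule.subset_span ⟨j, rfl⟩
    · rw [Submodule.span_le]
      rintro x ⟨j, rfl⟩
      obtain ⟨i, hi⟩ := h2 j
      exact Submodule.subset_span ⟨i, hi⟩
  rw [hspan]
  exact finrank_span_eq_card (b.linearIndependent.comp u hu)
end Helpers

set_option maxHeartbeats 4000000 in
theorem construct {m : ℕ} {F : Type*} [Field F] (G : Matrix (Fin m) (Fin m) F)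
    (r₁ r₂ r₃ : ℕ)
    (h1 : G.rank ≤ r₁) (h1' : 2 * r₁ ≤ m) (h2 : G.rank ≤ r₂) (h2' : 2 * r₂ ≤ m)
    (h3 : G.rank ≤ r₃) (h3' : 2 * r₃ ≤ m) :
    ∃ S₁ S₂ S₃ : Matrix (Fin m) (Fin m) F,
      S₁ * S₁ = 0 ∧ S₂ * S₂ = 0 ∧ S₃ * S₃ = 0 ∧ G = S₁ * S₂ * S₃ ∧
      S₁.rank = r₁ ∧ S₂.rank = r₂ ∧ S₃.rank = r₃ := by
  classical
  set V := Fin m → F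
  set f : V →ₗ[F] V := G.mulVecLin with hf
  have hk : finrank F (LinearMap.range f) = G.rank := rfl
  set k := G.rank with hkdef
  have hfin : finrank F V = m := Module.finrank_fin_fun F
  have hrn : finrank F (LinearMap.range f) + finrank F (LinearMap.ker f) = m := by
    rw [f.finrank_range_add_finrank_ker, hfin]
  have hker : finrank F (LinearMap.ker f) = m - k := by omega
  have hkm : 2 * k ≤ m := le_trans (by omega) h1'
  -- the complement C avoiding range f
  obtain ⟨C, hCk, hCN, hCR⟩ := exists_avoid k (LinearMap.ker f) (LinearMap.range f)
    (by omega) (by omega)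
  have hcompl : IsCompl C (LinearMap.ker f) := by
    constructor
    · exact disjoint_iff.mpr hCN
    · rw [codisjoint_iff]
      apply Submodule.eq_top_of_finrank_eq
      have := Submodule.finrank_sup_add_finrank_inf_eq C (LinearMap.ker f)
      rw [hCN, finrank_bot] at this
      omega
  set M := m - k with hM
  have hkM : k ≤ M := by omega
  let bC : Basis (Fin k) F C := Module.finBasisOfFinrankEq F C hCk
  let bN : Basis (Fin M) F (LinearMap.ker f) := Module.finBasisOfFinrankEq F _ hker
  let B1 : Basis (Fin k ⊕ Fin M) F V :=
    (bC.prod bN).map (Submodule.prodEquivOfIsCompl C (LinearMap.ker f) hcompl)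
  have hB1l : ∀ i, B1 (Sum.inl i) = (bC i : V) := by
    intro i
    simp [B1, Basis.prod_apply, Submodule.coe_prodEquivOfIsCompl']
  have hB1r : ∀ j, B1 (Sum.inr j) = (bN j : V) := by
    intro j
    simp [B1, Basis.prod_apply, Submodule.coe_prodEquivOfIsCompl']
  -- the families c and y
  let y : Fin k → V := fun i => f (bC i : V)
  let cy : Fin k ⊕ Fin k → V := Sum.elim (fun i => (bC i : V)) y
  have lic : LinearIndependent F (fun i => (bC i : V)) :=
    bC.linearIndependent.map' C.subtype (Submodule.ker_subtype C)
  have hspanc : span F (Set.range fun i => (bC i : V)) ≤ C := by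
    rw [Submodule.span_le]
    rintro x ⟨i, rfl⟩
    exact (bC i).2
  have hspany : span F (Set.range y) ≤ LinearMap.range f := by
    rw [Submodule.span_le]
    rintro x ⟨i, rfl⟩
    exact ⟨(bC i : V), rfl⟩
  have liy : LinearIndependent F y := by
    have : LinearIndependent F (f ∘ fun i => (bC i : V)) := by
      apply lic.map
      exact Submodule.disjoint_def.mpr fun x hx hker =>
        (Submodule.eq_bot_iff _).mp hCN x ⟨hspanc hx, hker⟩
    exact this
  have licy : LinearIndependent F cy := by
    apply lic.sum_type liy
    have hdisj : Disjoint C (LinearMap.range f) := disjoint_iff.mpr hCR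
    exact Disjoint.mono hspanc hspany hdisj
  set W := span F (Set.range cy) with hWdef
  have hWrank : finrank F W = k + k := by
    rw [hWdef, finrank_span_eq_card licy]
    simp
  obtain ⟨W', hWW'⟩ := Submodule.exists_isCompl W
  have hW' : finrank F W' = m - 2 * k := by
    have := Submodule.finrank_add_eq_of_isCompl hWW'
    rw [hWrank, hfin] at this
    omega
  let bW : Basis (Fin k ⊕ Fin k) F W := Basis.span licy
  let bW' : Basis (Fin (m - 2 * k)) F W' := Module.finBasisOfFinrankEq F _ hW'
  let B2 : Basis ((Fin k ⊕ Fin k) ⊕ Fin (m - 2 * k)) F V :=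
    (bW.prod bW').map (Submodule.prodEquivOfIsCompl W W' hWW')
  have hB2l : ∀ p, B2 (Sum.inl p) = cy p := by
    intro p
    simp only [B2, Basis.map_apply, Basis.prod_apply, Sum.elim_inl, Function.comp,
      Submodule.coe_prodEquivOfIsCompl', LinearMap.coe_inl, Submodule.coe_zero, add_zero, bW]
    exact congrArg Subtype.val (Basis.span_apply licy p)
  have hB2r : ∀ j, B2 (Sum.inr j) = (bW' j : V) := by
    intro j
    simp [B2, Basis.prod_apply, Submodule.coe_prodEquivOfIsCompl']
  -- σ₁
  let z : ((Fin k ⊕ Fin k) ⊕ Fin (m - 2 * k)) → V :=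
    Sum.elim (Sum.elim y (fun _ => 0))
      (fun j => if h : (j : ℕ) < r₁ - k then B2 (Sum.inr ⟨(j : ℕ) + (r₁ - k), by omega⟩) else 0)
  set σ₁ := B2.constr F z with hσ₁
  have hσ₁sq : σ₁ ∘ₗ σ₁ = 0 := by
    apply constr_sq_zero
    rintro ((i | i) | j)
    · exact Or.inr ⟨Sum.inl (Sum.inr i), (hB2l (Sum.inr i)).symm, rfl⟩
    · exact Or.inl rfl
    · dsimp only [z, Sum.elim_inr]
      split_ifs with h
      · refine Or.inr ⟨Sum.inr ⟨(j : ℕ) + (r₁ - k), by omega⟩, rfl, ?_⟩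
        dsimp only [Sum.elim_inr]
        rw [dif_neg (by omega)]
      · exact Or.inl rfl
  let u₁ : Fin r₁ → ((Fin k ⊕ Fin k) ⊕ Fin (m - 2 * k)) := fun t =>
    if h : (t : ℕ) < k then Sum.inl (Sum.inr ⟨(t : ℕ), h⟩)
    else Sum.inr ⟨(t : ℕ) - k + (r₁ - k), by omega⟩
  have hσ₁rank : finrank F (LinearMap.range σ₁) = r₁ := by
    rw [hσ₁, constr_rank B2 z u₁ ?inj ?ha ?hb]
    · simp
    case inj =>
      intro a b hab
      dsimp only [u₁] at hab
      split_ifs at hab with ha hb hb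
      all_goals simp only [Sum.inl.injEq, Sum.inr.injEq, Fin.mk.injEq] at hab
      · exact Fin.ext hab
      · exact Fin.ext (by omega)
    case ha =>
      rintro ((i | i) | j)
      · refine Or.inr ⟨⟨(i : ℕ), by omega⟩, ?_⟩
        dsimp only [u₁]
        rw [dif_pos (by simpa using i.isLt)]
        dsimp only [z, Sum.elim_inl]
        rw [hB2l]
        simp [cy]
      · exact Or.inl rfl
      · dsimp only [z, Sum.elim_inr]
        split_ifs with h
        · refine Or.inr ⟨⟨k + (j : ℕ), by omega⟩, ?_⟩
          dsimp only [u₁]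
          rw [dif_neg (by omega)]
          exact congrArg B2 (congrArg Sum.inr (Fin.ext (by simp)))
        · exact Or.inl rfl
    case hb =>
      intro t
      dsimp only [u₁]
      by_cases ht : (t : ℕ) < k
      · refine ⟨Sum.inl (Sum.inl ⟨(t : ℕ), ht⟩), ?_⟩
        rw [dif_pos ht]
        dsimp only [z, Sum.elim_inl]
        rw [hB2l]
        simp [cy]
      · refine ⟨Sum.inr ⟨(t : ℕ) - k, by omega⟩, ?_⟩
        rw [dif_neg ht]
        dsimp only [z, Sum.elim_inr]
        rw [dif_pos (by omega)]
  -- σ₃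
  let x : (Fin k ⊕ Fin M) → V :=
    Sum.elim (fun i => B1 (Sum.inr ⟨(i : ℕ), by omega⟩))
      (fun j => if h : M - 2 * (r₃ - k) ≤ (j : ℕ) ∧ (j : ℕ) < M - (r₃ - k) then
        B1 (Sum.inr ⟨(j : ℕ) + (r₃ - k), by omega⟩) else 0)
  set σ₃ := B1.constr F x with hσ₃
  have hσ₃sq : σ₃ ∘ₗ σ₃ = 0 := by
    apply constr_sq_zero
    rintro (i | j)
    · refine Or.inr ⟨Sum.inr ⟨(i : ℕ), by omega⟩, rfl, ?_⟩
      dsimp only [x, Sum.elim_inr]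
      rw [dif_neg (by omega)]
    · dsimp only [x, Sum.elim_inr]
      split_ifs with h
      · refine Or.inr ⟨Sum.inr ⟨(j : ℕ) + (r₃ - k), by omega⟩, rfl, ?_⟩
        dsimp only [Sum.elim_inr]
        rw [dif_neg (by omega)]
      · exact Or.inl rfl
  let u₃ : Fin r₃ → (Fin k ⊕ Fin M) := fun t =>
    if h : (t : ℕ) < k then Sum.inr ⟨(t : ℕ), by omega⟩
    else Sum.inr ⟨M - (r₃ - k) + ((t : ℕ) - k), by omega⟩
  have hσ₃rank : finrank F (LinearMap.range σ₃) = r₃ := by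
    rw [hσ₃, constr_rank B1 x u₃ ?inj ?ha ?hb]
    · simp
    case inj =>
      intro a b hab
      dsimp only [u₃] at hab
      split_ifs at hab with ha hb hb
      all_goals simp only [Sum.inr.injEq, Fin.mk.injEq] at hab
      · exact Fin.ext hab
      · exact Fin.ext (by omega)
      · exact Fin.ext (by omega)
      · exact Fin.ext (by omega)
    case ha =>
      rintro (i | j)
      · refine Or.inr ⟨⟨(i : ℕ), by omega⟩, ?_⟩
        dsimp only [u₃, x, Sum.elim_inl]
        rw [dif_pos (by simpa using i.isLt)]
      · dsimp only [x, Sum.elim_inr]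
        split_ifs with h
        · refine Or.inr ⟨⟨k + ((j : ℕ) - (M - 2 * (r₃ - k))), by omega⟩, ?_⟩
          dsimp only [u₃]
          rw [dif_neg (by omega)]
          exact congrArg B1 (congrArg Sum.inr (Fin.ext (by simp; omega)))
        · exact Or.inl rfl
    case hb =>
      intro t
      dsimp only [u₃]
      by_cases ht : (t : ℕ) < k
      · refine ⟨Sum.inl ⟨(t : ℕ), ht⟩, ?_⟩
        rw [dif_pos ht]
        rfl
      · refine ⟨Sum.inr ⟨M - 2 * (r₃ - k) + ((t : ℕ) - k), by omega⟩, ?_⟩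
        rw [dif_neg ht]
        dsimp only [x, Sum.elim_inr]
        rw [dif_pos (by constructor <;> omega)]
        exact congrArg B1 (congrArg Sum.inr (Fin.ext (by simp; omega)))
  -- σ₂
  let w : (Fin k ⊕ Fin M) → V :=
    Sum.elim (fun _ => 0)
      (fun j => if h : (j : ℕ) < k then B1 (Sum.inl ⟨(j : ℕ), h⟩)
        else if h2 : (j : ℕ) < k + (r₂ - k) then B1 (Sum.inr ⟨(j : ℕ) + (r₂ - k), by omega⟩)
        else 0)
  set σ₂ := B1.constr F w with hσ₂
  have hσ₂sq : σ₂ ∘ₗ σ₂ = 0 := by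
    apply constr_sq_zero
    rintro (i | j)
    · exact Or.inl rfl
    · dsimp only [w, Sum.elim_inr]
      split_ifs with h h2
      · exact Or.inr ⟨Sum.inl ⟨(j : ℕ), h⟩, rfl, rfl⟩
      · refine Or.inr ⟨Sum.inr ⟨(j : ℕ) + (r₂ - k), by omega⟩, rfl, ?_⟩
        dsimp only [Sum.elim_inr]
        rw [dif_neg (by omega), dif_neg (by omega)]
      · exact Or.inl rfl
  let u₂ : Fin r₂ → (Fin k ⊕ Fin M) := fun t =>
    if h : (t : ℕ) < k then Sum.inl ⟨(t : ℕ), h⟩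
    else Sum.inr ⟨(t : ℕ) + (r₂ - k), by omega⟩
  have hσ₂rank : finrank F (LinearMap.range σ₂) = r₂ := by
    rw [hσ₂, constr_rank B1 w u₂ ?inj ?ha ?hb]
    · simp
    case inj =>
      intro a b hab
      dsimp only [u₂] at hab
      split_ifs at hab with ha hb hb
      all_goals simp only [Sum.inl.injEq, Sum.inr.injEq, Fin.mk.injEq] at hab
      · exact Fin.ext hab
      · exact Fin.ext (by omega)
    case ha =>
      rintro (i | j)
      · exact Or.inl rfl
      · dsimp only [w, Sum.elim_inr]
        split_ifs with h h2
        · refine Or.inr ⟨⟨(j : ℕ), by omega⟩, ?_⟩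
          dsimp only [u₂]
          rw [dif_pos (by simpa using h)]
        · refine Or.inr ⟨⟨(j : ℕ), by omega⟩, ?_⟩
          dsimp only [u₂]
          rw [dif_neg (by simpa using h)]
        · exact Or.inl rfl
    case hb =>
      intro t
      dsimp only [u₂]
      by_cases ht : (t : ℕ) < k
      · refine ⟨Sum.inr ⟨(t : ℕ), by omega⟩, ?_⟩
        rw [dif_pos ht]
        dsimp only [w, Sum.elim_inr]
        rw [dif_pos ht]
      · refine ⟨Sum.inr ⟨(t : ℕ), by omega⟩, ?_⟩
        rw [dif_neg ht]
        dsimp only [w, Sum.elim_inr]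
        rw [dif_neg ht, dif_pos (by omega)]
  -- composition
  have hσ₁c : ∀ p, σ₁ (B2 p) = z p := fun p => by rw [hσ₁]; exact B2.constr_basis F z p
  have hσ₂c : ∀ p, σ₂ (B1 p) = w p := fun p => by rw [hσ₂]; exact B1.constr_basis F w p
  have hσ₃c : ∀ p, σ₃ (B1 p) = x p := fun p => by rw [hσ₃]; exact B1.constr_basis F x p
  have hcomp : σ₁ ∘ₗ (σ₂ ∘ₗ σ₃) = f := by
    apply B1.ext
    rintro (i | j)
    · simp only [LinearMap.comp_apply]
      rw [hσ₃c (Sum.inl i)]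
      have e1 : x (Sum.inl i) = B1 (Sum.inr ⟨(i : ℕ), by omega⟩) := rfl
      rw [e1, hσ₂c (Sum.inr ⟨(i : ℕ), by omega⟩)]
      have e2 : w (Sum.inr ⟨(i : ℕ), by omega⟩) = B1 (Sum.inl i) := by
        dsimp only [w, Sum.elim_inr]
        rw [dif_pos i.isLt]
      rw [e2, hB1l i]
      have e3 : ((bC i : V)) = B2 (Sum.inl (Sum.inl i)) := (hB2l (Sum.inl i)).symm
      conv_lhs => rw [e3]
      rw [hσ₁c (Sum.inl (Sum.inl i))]
      rfl
    · simp only [LinearMap.comp_apply]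
      rw [hσ₃c (Sum.inr j)]
      dsimp only [x, Sum.elim_inr]
      split_ifs with h
      · rw [hσ₂c (Sum.inr ⟨(j : ℕ) + (r₃ - k), by omega⟩)]
        dsimp only [w, Sum.elim_inr]
        rw [dif_neg (by omega), dif_neg (by omega), map_zero, hB1r j]
        exact (LinearMap.mem_ker.mp (bN j).2).symm
      · rw [map_zero, map_zero, hB1r j]
        exact (LinearMap.mem_ker.mp (bN j).2).symm
  -- back to matrices
  have hVm : ∀ σ : V →ₗ[F] V, Matrix.mulVecLin (LinearMap.toMatrix' σ) = σ := by
    intro σ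
    rw [← Matrix.toLin'_apply', Matrix.toLin'_toMatrix']
  have hGf : LinearMap.toMatrix' f = G := by
    rw [hf, ← Matrix.toLin'_apply' G, LinearMap.toMatrix'_toLin']
  have h00 : LinearMap.toMatrix' (0 : V →ₗ[F] V) = (0 : Matrix (Fin m) (Fin m) F) := by
    ext i j
    simp [LinearMap.toMatrix']
    try rfl
  refine ⟨LinearMap.toMatrix' σ₁, LinearMap.toMatrix' σ₂, LinearMap.toMatrix' σ₃,
    ?_, ?_, ?_, ?_, ?_, ?_, ?_⟩
  · rw [← LinearMap.toMatrix'_comp, hσ₁sq, h00]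
  · rw [← LinearMap.toMatrix'_comp, hσ₂sq, h00]
  · rw [← LinearMap.toMatrix'_comp, hσ₃sq, h00]
  · rw [← LinearMap.toMatrix'_comp, ← LinearMap.toMatrix'_comp, LinearMap.comp_assoc, hcomp, hGf]
  · show finrank F (LinearMap.range (Matrix.mulVecLin _)) = r₁
    rw [hVm]
    exact hσ₁rank
  · show finrank F (LinearMap.range (Matrix.mulVecLin _)) = r₂
    rw [hVm]
    exact hσ₂rank
  · show finrank F (LinearMap.range (Matrix.mulVecLin _)) = r₃
    rw [hVm]
    exact hσ₃rank

theorem toMatrix'_zero' {m : ℕ} {F : Type*} [Field F] :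
    LinearMap.toMatrix' (0 : (Fin m → F) →ₗ[F] (Fin m → F)) = (0 : Matrix (Fin m) (Fin m) F) := by
  ext i j
  simp [LinearMap.toMatrix']
  try rfl

theorem eq_toMatrix' {m : ℕ} {F : Type*} [Field F] (A : Matrix (Fin m) (Fin m) F) :
    A = LinearMap.toMatrix' A.mulVecLin := by
  rw [← Matrix.toLin'_apply' A, LinearMap.toMatrix'_toLin']

theorem sq_zero_range_le_ker {m : ℕ} {F : Type*} [Field F] {S : Matrix (Fin m) (Fin m) F}
    (h : S * S = 0) : LinearMap.range S.mulVecLin ≤ LinearMap.ker S.mulVecLin := by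
  have hcomp : S.mulVecLin ∘ₗ S.mulVecLin = 0 := by
    rw [← Matrix.mulVecLin_mul, h, Matrix.mulVecLin_zero]
  rintro _ ⟨v, rfl⟩
  rw [LinearMap.mem_ker, ← LinearMap.comp_apply, hcomp, LinearMap.zero_apply]

theorem sq_zero_two_rank_le {m : ℕ} {F : Type*} [Field F] {S : Matrix (Fin m) (Fin m) F}
    (h : S * S = 0) : 2 * S.rank ≤ m := by
  have h1 : finrank F (LinearMap.range S.mulVecLin) ≤ finrank F (LinearMap.ker S.mulVecLin) :=
    Submodule.finrank_mono (sq_zero_range_le_ker h)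
  have h2 := LinearMap.finrank_range_add_finrank_ker S.mulVecLin
  rw [Module.finrank_fin_fun] at h2
  have h3 : S.rank = finrank F (LinearMap.range S.mulVecLin) := rfl
  omega

/-- Botha, Theorem 5. Let `F` be a field and `G ∈ M_m(F)`. Then `G` is a
product of finitely many (one or more) square-zero matrices iff `2 rank G ≤ m`; in that case
three factors suffice, with arbitrary admissible ranks. The bound three is sharp: any nonzero
`G` with `R(G) = N(G)` satisfies `2 rank G ≤ m` but is not a product of two square-zero
matrices. -/
theorem stmt11 {m : ℕ} {F : Type*} [Field F] (G : Matrix (Fin m) (Fin m) F) :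
    ((∃ L : List (Matrix (Fin m) (Fin m) F),
        L ≠ [] ∧ (∀ S ∈ L, S * S = 0) ∧ G = L.prod) ↔ 2 * G.rank ≤ m) ∧
    (2 * G.rank ≤ m → ∀ r₁ r₂ r₃ : ℕ,
      G.rank ≤ r₁ → 2 * r₁ ≤ m → G.rank ≤ r₂ → 2 * r₂ ≤ m → G.rank ≤ r₃ → 2 * r₃ ≤ m →
      ∃ S₁ S₂ S₃ : Matrix (Fin m) (Fin m) F,
        S₁ * S₁ = 0 ∧ S₂ * S₂ = 0 ∧ S₃ * S₃ = 0 ∧ G = S₁ * S₂ * S₃ ∧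
        S₁.rank = r₁ ∧ S₂.rank = r₂ ∧ S₃.rank = r₃) ∧
    (∀ G' : Matrix (Fin m) (Fin m) F, G' ≠ 0 →
      LinearMap.range G'.mulVecLin = LinearMap.ker G'.mulVecLin →
      2 * G'.rank ≤ m ∧
      ¬∃ H K : Matrix (Fin m) (Fin m) F, H * H = 0 ∧ K * K = 0 ∧ G' = H * K) := by
  refine ⟨⟨?_, ?_⟩, ?_, ?_⟩
  · rintro ⟨L, hNe, hSq, rfl⟩
    cases L with
    | nil => exact absurd rfl hNe
    | cons S T =>
      have hS : S * S = 0 := hSq S List.mem_cons_self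
      have hrankS : (S :: T).prod.rank ≤ S.rank := by
        rw [List.prod_cons]
        exact Matrix.rank_mul_le_left S T.prod
      have h2S := sq_zero_two_rank_le hS
      omega
  · intro hG
    obtain ⟨S₁, S₂, S₃, hs1, hs2, hs3, hprod, -, -, -⟩ :=
      construct G G.rank G.rank G.rank le_rfl hG le_rfl hG le_rfl hG
    refine ⟨[S₁, S₂, S₃], by simp, ?_, ?_⟩
    · intro S hS
      simp only [List.mem_cons, List.not_mem_nil, or_false] at hS
      rcases hS with rfl | rfl | rfl <;> assumption
    · simpa [List.prod_cons, mul_assoc] using hprod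
  · intro _ r₁ r₂ r₃ a b c d e f2
    exact construct G r₁ r₂ r₃ a b c d e f2
  · intro G' hG0 hRN
    constructor
    · have h2 := LinearMap.finrank_range_add_finrank_ker G'.mulVecLin
      rw [Module.finrank_fin_fun, ← hRN] at h2
      have h3 : G'.rank = finrank F (LinearMap.range G'.mulVecLin) := rfl
      omega
    · rintro ⟨H, K, hH, hK, rfl⟩
      apply hG0
      have hchain : (H * K).mulVecLin = 0 := by
        apply LinearMap.ext
        intro v
        have e1 : (H * K).mulVecLin v = H.mulVecLin (K.mulVecLin v) := by
          rw [Matrix.mulVecLin_mul, LinearMap.comp_apply]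
        rw [e1, LinearMap.zero_apply]
        -- K v ∈ range K ≤ ker K ≤ ker (HK) = range (HK) ≤ range H ≤ ker H
        have m1 : K.mulVecLin v ∈ LinearMap.ker K.mulVecLin :=
          sq_zero_range_le_ker hK ⟨v, rfl⟩
        have m2 : K.mulVecLin v ∈ LinearMap.ker (H * K).mulVecLin := by
          rw [LinearMap.mem_ker, Matrix.mulVecLin_mul, LinearMap.comp_apply,
            LinearMap.mem_ker.mp m1, map_zero]
        rw [← hRN] at m2
        obtain ⟨u, hu⟩ := m2
        have m3 : K.mulVecLin v ∈ LinearMap.range H.mulVecLin := by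
          refine ⟨K.mulVecLin u, ?_⟩
          rw [← LinearMap.comp_apply, ← Matrix.mulVecLin_mul, hu]
        have m4 : K.mulVecLin v ∈ LinearMap.ker H.mulVecLin := sq_zero_range_le_ker hH m3
        exact LinearMap.mem_ker.mp m4
      rw [eq_toMatrix' (H * K), hchain, toMatrix'_zero']
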